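/- Let 𝓘_Ω be a symmetric positive definite real 2×2 matrix, and let Δ, 𝓘𝓘_Ω be real 2×2 matrices such that 𝓘𝓘_Ω·adj(Δᵀ) is symmetric (the normality condition). Define 𝒦(b) = (bᵀ·𝓘𝓘_Ω·adj(Δᵀ)·b)/(bᵀ·𝓘_Ω·b) on ℝ²∖{0}, and let P = [[0, 1], [−1, 0]]. Then for every u ∈ ℝ² with b := Δᵀ·u ≠ 0, b is a critical point of 𝒦 if and only if uᵀ·Δ·P·adj(𝓘𝓘_Ω)ᵀ·Δ·𝓘_Ω·Δᵀ·u = 0. -/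

import Mathlib

open Matrix

/-- The dot-product-with-`v` continuous linear map on `Fin 2 → ℝ`. -/
noncomputable def dpCLM (v : Fin 2 → ℝ) : (Fin 2 → ℝ) →L[ℝ] ℝ :=
  LinearMap.toContinuousLinearMap
    { toFun := fun x => x ⬝ᵥ v
      map_add' := fun x y => add_dotProduct x y v
      map_smul' := fun c x => smul_dotProduct c x v }

@[simp] lemma dpCLM_apply (v x : Fin 2 → ℝ) : dpCLM v x = x ⬝ᵥ v := rfl

/-- Derivative of a quadratic form on `Fin 2 → ℝ`. -/
lemma hasFDerivAt_quad (M : Matrix (Fin 2) (Fin 2) ℝ) (b : Fin 2 → ℝ) :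
    HasFDerivAt (fun x : Fin 2 → ℝ => x ⬝ᵥ M.mulVec x)
      (dpCLM ((M + Mᵀ).mulVec b)) b := by
  have h0 : HasFDerivAt (fun x : Fin 2 → ℝ => x 0)
      (ContinuousLinearMap.proj (0 : Fin 2) : (Fin 2 → ℝ) →L[ℝ] ℝ) b :=
    (ContinuousLinearMap.proj (0 : Fin 2) : (Fin 2 → ℝ) →L[ℝ] ℝ).hasFDerivAt
  have h1 : HasFDerivAt (fun x : Fin 2 → ℝ => x 1)
      (ContinuousLinearMap.proj (1 : Fin 2) : (Fin 2 → ℝ) →L[ℝ] ℝ) b :=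
    (ContinuousLinearMap.proj (1 : Fin 2) : (Fin 2 → ℝ) →L[ℝ] ℝ).hasFDerivAt
  have key := (h0.mul (((h0.const_mul (M 0 0)).add (h1.const_mul (M 0 1))))).add
      (h1.mul (((h0.const_mul (M 1 0)).add (h1.const_mul (M 1 1)))))
  have hfun : (fun x : Fin 2 → ℝ => x ⬝ᵥ M.mulVec x)
      = (fun x : Fin 2 → ℝ =>
          x 0 * (M 0 0 * x 0 + M 0 1 * x 1) + x 1 * (M 1 0 * x 0 + M 1 1 * x 1)) := by
    funext x
    simp [dotProduct, Matrix.mulVec, Fin.sum_univ_two]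
  rw [hfun]
  refine key.congr_fderiv ?_
  ext x
  simp [Matrix.mulVec, dotProduct, Fin.sum_univ_two, Matrix.transpose_apply]
  ring

/-- A continuous linear functional on `Fin 2 → ℝ` vanishes iff it vanishes on the
standard basis. -/
lemma clm2_eq_zero_iff (D : (Fin 2 → ℝ) →L[ℝ] ℝ) :
    D = 0 ↔ D (Pi.single 0 1) = 0 ∧ D (Pi.single 1 1) = 0 := by
  constructor
  · intro h; simp [h]
  · rintro ⟨h0, h1⟩
    ext x
    have hx : x = x 0 • (Pi.single 0 1 : Fin 2 → ℝ) + x 1 • (Pi.single 1 1 : Fin 2 → ℝ) := by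
      funext i
      fin_cases i <;> simp
    rw [hx]
    simp [h0, h1]

set_option maxRecDepth 20000 in
set_option maxHeartbeats 1000000 in
/-- for a normal congruence (`𝓘𝓘_Ω·adj(Δᵀ)` symmetric), `b = Δᵀu ≠ 0`
is a critical point of the Ω-Kummer curvature function iff
`uᵀ·Δ·P·adj(𝓘𝓘_Ω)ᵀ·Δ·𝓘_Ω·Δᵀ·u = 0`. -/
theorem stmt_8 (IΩ Δ IIΩ : Matrix (Fin 2) (Fin 2) ℝ) (hpos : IΩ.PosDef)
    (hsym : (IIΩ * (Δᵀ).adjugate).IsSymm)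
    (𝒦 : (Fin 2 → ℝ) → ℝ)
    (h𝒦 : ∀ b, 𝒦 b = (b ⬝ᵥ (IIΩ * (Δᵀ).adjugate).mulVec b) / (b ⬝ᵥ IΩ.mulVec b))
    (P : Matrix (Fin 2) (Fin 2) ℝ) (hP : P = !![0, 1; -1, 0])
    (u b : Fin 2 → ℝ) (hbdef : b = Δᵀ.mulVec u) (hb : b ≠ 0) :
    fderiv ℝ 𝒦 b = 0 ↔
      u ⬝ᵥ (Δ * P * (IIΩ.adjugate)ᵀ * Δ * IΩ * Δᵀ).mulVec u = 0 := by
  subst hP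
  subst hbdef
  set b : Fin 2 → ℝ := Δᵀ.mulVec u with hbdef
  set A := IIΩ * (Δᵀ).adjugate with hA
  have hAsym : Aᵀ = A := hsym
  have hGsym : IΩᵀ = IΩ := by
    have h := hpos.1
    rwa [Matrix.IsHermitian, Matrix.conjTranspose_eq_transpose_of_trivial] at h
  -- positivity of the denominator
  set f : ℝ := b ⬝ᵥ A.mulVec b with hf
  set g : ℝ := b ⬝ᵥ IΩ.mulVec b with hg
  have hgpos : 0 < g := by
    have := hpos.re_dotProduct_pos hb
    simpa [hg] using this
  have hg0 : g ≠ 0 := ne_of_gt hgpos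
  -- the derivative of 𝒦 at b
  have hF := hasFDerivAt_quad A b
  have hG := hasFDerivAt_quad IΩ b
  have hinv : HasFDerivAt (fun y : ℝ => y⁻¹)
      (-(ContinuousLinearMap.mulLeftRight ℝ ℝ g⁻¹ g⁻¹)) g := hasFDerivAt_inv' hg0
  have hGinv : HasFDerivAt (fun x : Fin 2 → ℝ => (x ⬝ᵥ IΩ.mulVec x)⁻¹)
      ((-(ContinuousLinearMap.mulLeftRight ℝ ℝ g⁻¹ g⁻¹)).comp
        (dpCLM ((IΩ + IΩᵀ).mulVec b))) b := hinv.comp b hG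
  have hKfun : 𝒦 = fun x => (x ⬝ᵥ A.mulVec x) * (x ⬝ᵥ IΩ.mulVec x)⁻¹ := by
    funext x
    rw [h𝒦 x, div_eq_mul_inv]
  have hK : HasFDerivAt 𝒦
      (f • ((-(ContinuousLinearMap.mulLeftRight ℝ ℝ g⁻¹ g⁻¹)).comp
          (dpCLM ((IΩ + IΩᵀ).mulVec b)))
        + g⁻¹ • dpCLM ((A + Aᵀ).mulVec b)) b := by
    rw [hKfun]
    exact hF.mul hGinv
  rw [hK.fderiv]
  -- abbreviations
  set v : Fin 2 → ℝ := A.mulVec b with hv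
  set w : Fin 2 → ℝ := IΩ.mulVec b with hw
  -- a scalar helper equivalence
  have key : ∀ x y : ℝ,
      (f * -(g⁻¹ * (2 * x) * g⁻¹) + g⁻¹ * (2 * y) = 0) ↔ g * y = f * x := by
    intro x y
    have hg2 : g ^ 2 ≠ 0 := pow_ne_zero 2 hg0
    rw [show f * -(g⁻¹ * (2 * x) * g⁻¹) + g⁻¹ * (2 * y)
        = 2 * (g * y - f * x) / g ^ 2 by field_simp; ring]
    rw [div_eq_zero_iff]
    constructor
    · rintro (h | h)
      · linarith
      · exact absurd h hg2
    · intro h; left; linarith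
  -- step 1 : derivative vanishes iff g • v = f • w componentwise
  have step1 : (f • ((-(ContinuousLinearMap.mulLeftRight ℝ ℝ g⁻¹ g⁻¹)).comp
          (dpCLM ((IΩ + IΩᵀ).mulVec b)))
        + g⁻¹ • dpCLM ((A + Aᵀ).mulVec b)) = 0
      ↔ (g * v 0 = f * w 0 ∧ g * v 1 = f * w 1) := by
    rw [clm2_eq_zero_iff]
    have h2A : (A + Aᵀ).mulVec b = fun i => 2 * v i := by
      funext i
      simp [hAsym, Matrix.add_mulVec, hv, two_mul]
    have h2G : (IΩ + IΩᵀ).mulVec b = fun i => 2 * w i := by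
      funext i
      simp [hGsym, Matrix.add_mulVec, hw, two_mul]
    rw [h2A, h2G]
    have happ : ∀ i : Fin 2,
        (f • ((-(ContinuousLinearMap.mulLeftRight ℝ ℝ g⁻¹ g⁻¹)).comp
            (dpCLM fun j => 2 * w j)) + g⁻¹ • dpCLM fun j => 2 * v j)
          (Pi.single i 1)
        = f * -(g⁻¹ * (2 * w i) * g⁻¹) + g⁻¹ * (2 * v i) := by
      intro i
      simp [ContinuousLinearMap.add_apply, ContinuousLinearMap.smul_apply,
        ContinuousLinearMap.comp_apply, ContinuousLinearMap.mulLeftRight_apply,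
        single_dotProduct]
    rw [happ 0, happ 1, key (w 0) (v 0), key (w 1) (v 1)]
  rw [step1]
  -- expansions of f and g
  have hfexp : f = b 0 * v 0 + b 1 * v 1 := by
    simp [hf, hv, dotProduct, Fin.sum_univ_two]
  have hgexp : g = b 0 * w 0 + b 1 * w 1 := by
    simp [hg, hw, dotProduct, Fin.sum_univ_two]
  -- step 2 : componentwise proportionality iff cross product vanishes
  have step2 : (g * v 0 = f * w 0 ∧ g * v 1 = f * w 1) ↔ v 0 * w 1 - v 1 * w 0 = 0 := by
    constructor
    · rintro ⟨h0, h1⟩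
      have hcg : g * (v 0 * w 1 - v 1 * w 0) = 0 := by
        linear_combination w 1 * h0 - w 0 * h1
      rcases mul_eq_zero.mp hcg with h | h
      · exact absurd h hg0
      · exact h
    · intro hcross
      constructor
      · rw [hfexp, hgexp]
        linear_combination b 1 * hcross
      · rw [hfexp, hgexp]
        linear_combination (-(b 0)) * hcross
  rw [step2]
  -- step 3 : the cross product equals the right-hand quadratic form
  have h01' : IIΩ 1 0 * Δ 1 1 + -(IIΩ 1 1 * Δ 0 1)
      = -(IIΩ 0 0 * Δ 1 0) + IIΩ 0 1 * Δ 0 0 := by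
    have h := congrFun (congrFun hsym 0) 1
    simp [hA, Matrix.mul_apply, Matrix.adjugate_fin_two, Fin.sum_univ_two,
      Matrix.transpose_apply] at h
    linarith
  have step3 : u ⬝ᵥ (Δ * !![(0:ℝ), 1; -1, 0] * (IIΩ.adjugate)ᵀ * Δ * IΩ * Δᵀ).mulVec u
      = v 0 * w 1 - v 1 * w 0 := by
    rw [hv, hw, hA, hbdef]
    simp only [← Matrix.mulVec_mulVec]
    simp [Matrix.mulVec, dotProduct, Fin.sum_univ_two, Matrix.adjugate_fin_two]
    linear_combination
      ((Δ 0 0 * u 0 + Δ 1 0 * u 1) *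
            (IΩ 0 0 * (Δ 0 0 * u 0 + Δ 1 0 * u 1) + IΩ 0 1 * (Δ 0 1 * u 0 + Δ 1 1 * u 1)) +
          (Δ 0 1 * u 0 + Δ 1 1 * u 1) *
            (IΩ 1 0 * (Δ 0 0 * u 0 + Δ 1 0 * u 1) + IΩ 1 1 * (Δ 0 1 * u 0 + Δ 1 1 * u 1))) * h01'
  rw [step3]
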